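/- Let T : 𝕋^d → 𝕋^d satisfy dist(Tx, Ty) ≤ η dist(x, y) for all x, y, with η ≥ 1, and suppose θ has a density ρ ∈ L^∞ with respect to Lebesgue measure on S. Let z ∈ 𝕋^d, ε ∈ (0, 1/2], r > 0 and let α ≥ 1 be an integer with 2 η^α r ≤ ε. Then (θ ⊗ θ){(ξ, ξ') ∈ S × S : there exist an integer j with 1 ≤ j ≤ α and a point x ∈ 𝕋^d such that dist(x + εξ, z) < r and dist(T^j x + εξ', z) < r} ≤ 3^d · K_d · ‖ρ‖_∞ · (2r/ε)^d · Σ_{j=1}^{α} η^{jd}, where K_d is the Lebesgue volume of the closed Euclidean unit ball of ℝ^d. -/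

import Mathlib

open MeasureTheory Metric Set Filter Topology

noncomputable section

/-- The `d`-dimensional torus `(ℝ/ℤ)^d`. -/
abbrev Torus (d : ℕ) := Fin d → AddCircle (1 : ℝ)

/-- Translation of a torus point by a vector `w ∈ ℝ^d` (via the projection `ℝ^d → 𝕋^d`). -/
def tr {d : ℕ} (x : Torus d) (w : EuclideanSpace ℝ (Fin d)) : Torus d :=
  fun i => x i + (w i : AddCircle (1 : ℝ))

/-- The translation-invariant metric on the torus induced by the Euclidean norm on `ℝ^d`. -/
def tdist {d : ℕ} (x y : Torus d) : ℝ :=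
  Real.sqrt (∑ i, dist (x i) (y i) ^ 2)

/-- The open ball of center `p` and radius `r` in the torus, for the metric `tdist`. -/
def tball {d : ℕ} (p : Torus d) (r : ℝ) : Set (Torus d) := {y | tdist y p < r}

/-- The observable process `X_i(x, ξ̄) = -log dist(T^i x + ε ξ_i, z)`. -/
def Xobs {d : ℕ} (T : Torus d → Torus d) (z : Torus d) (ε : ℝ) (i : ℕ)
    (p : Torus d × (ℕ → EuclideanSpace ℝ (Fin d))) : ℝ :=
  - Real.log (tdist (tr (T^[i] p.1) (ε • p.2 i)) z)

/-- `Θ` is the infinite product measure `θ^{⊗ℕ}`: every finite-dimensional marginal of `Θ`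
is the corresponding finite product of copies of `θ`. -/
def IsIIDProduct {d : ℕ} (θ : Measure (EuclideanSpace ℝ (Fin d)))
    (Θ : Measure (ℕ → EuclideanSpace ℝ (Fin d))) : Prop :=
  ∀ n : ℕ, Θ.map (fun ξ (i : Fin n) => ξ i) = Measure.pi fun _ : Fin n => θ

/-- `(T, ν)` has polynomial decay of correlations with constant `C`:
for every `g ∈ L¹(ν)`, every bounded Borel `h` and every `t ≥ 1`,
`|∫ g ⬝ (h ∘ T^t) dν − (∫ g dν)(∫ h dν)| ≤ C ‖h‖_∞ ‖g‖_{L¹(ν)} t^{-2}`. -/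
def DecayCor {d : ℕ} (T : Torus d → Torus d) (ν : Measure (Torus d)) (C : ℝ) : Prop :=
  ∀ g : Torus d → ℝ, Integrable g ν →
    ∀ h : Torus d → ℝ, Measurable h → ∀ K : ℝ, (∀ x, |h x| ≤ K) →
      ∀ t : ℕ, 1 ≤ t →
        |(∫ x, g x * h (T^[t] x) ∂ν) - (∫ x, g x ∂ν) * ∫ x, h x ∂ν| ≤
          C * K * (∫ x, |g x| ∂ν) / (t : ℝ) ^ 2

section Aux

variable {d : ℕ}

lemma sqrt_sq_sum_mono {a b : Fin d → ℝ} (ha : ∀ i, 0 ≤ a i) (h : ∀ i, a i ≤ b i) :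
    Real.sqrt (∑ i, a i ^ 2) ≤ Real.sqrt (∑ i, b i ^ 2) :=
  Real.sqrt_le_sqrt (Finset.sum_le_sum fun i _ => pow_le_pow_left₀ (ha i) (h i) 2)

lemma sqrt_sq_sum_eq_norm (a : Fin d → ℝ) :
    Real.sqrt (∑ i, a i ^ 2) = ‖(WithLp.equiv 2 (Fin d → ℝ)).symm a‖ := by
  rw [EuclideanSpace.norm_eq]
  simp [Real.norm_eq_abs, sq_abs]

lemma minkowski' (a b : Fin d → ℝ) :
    Real.sqrt (∑ i, (a i + b i) ^ 2) ≤ Real.sqrt (∑ i, a i ^ 2) + Real.sqrt (∑ i, b i ^ 2) := by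
  have h := norm_add_le ((WithLp.equiv 2 (Fin d → ℝ)).symm a) ((WithLp.equiv 2 (Fin d → ℝ)).symm b)
  rw [← sqrt_sq_sum_eq_norm a, ← sqrt_sq_sum_eq_norm b] at h
  refine le_trans (le_of_eq ?_) h
  rw [EuclideanSpace.norm_eq]
  simp [Real.norm_eq_abs, sq_abs]

lemma tdist_nonneg' (x y : Torus d) : 0 ≤ tdist x y := Real.sqrt_nonneg _

lemma tdist_comm' (x y : Torus d) : tdist x y = tdist y x := by
  unfold tdist; simp [dist_comm]

lemma tdist_triangle' (x y z : Torus d) : tdist x z ≤ tdist x y + tdist y z := by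
  have h1 : tdist x z ≤ Real.sqrt (∑ i, (dist (x i) (y i) + dist (y i) (z i)) ^ 2) :=
    sqrt_sq_sum_mono (fun i => dist_nonneg) fun i => dist_triangle (x i) (y i) (z i)
  exact h1.trans (minkowski' _ _)

lemma tdist_tr (x y : Torus d) (w : EuclideanSpace ℝ (Fin d)) :
    tdist (tr x w) (tr y w) = tdist x y := by
  unfold tdist tr
  congr 1
  exact Finset.sum_congr rfl fun i _ => by rw [dist_add_right]

lemma tr_tr_neg (z : Torus d) (w : EuclideanSpace ℝ (Fin d)) : tr (tr z (-w)) w = z := by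
  funext i
  show z i + ((-w) i : ℝ) + (w i : AddCircle (1:ℝ)) = z i
  rw [PiLp.neg_apply, QuotientAddGroup.mk_neg, add_assoc, neg_add_cancel, add_zero]

lemma circle_rep (c : AddCircle (1:ℝ)) : ∃ a : ℝ, (a : AddCircle (1:ℝ)) = c ∧ |a| ≤ 1/2 := by
  obtain ⟨b, rfl⟩ := QuotientAddGroup.mk_surjective c
  refine ⟨b - round b, ?_, abs_sub_round b⟩
  have h0 : ((round b : ℝ) : AddCircle (1:ℝ)) = 0 := by
    rw [AddCircle.coe_eq_zero_iff]
    exact ⟨round b, by simp⟩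
  rw [QuotientAddGroup.mk_sub, h0, sub_zero]

lemma circle_dist (a b : ℝ) :
    dist ((a : AddCircle (1:ℝ))) (b : AddCircle (1:ℝ)) = |a - b - round (a - b)| := by
  rw [dist_eq_norm, ← QuotientAddGroup.mk_sub, AddCircle.norm_eq]
  simp

lemma cont_tdist (a z : Torus d) (ε : ℝ) :
    Continuous fun ξ : EuclideanSpace ℝ (Fin d) => tdist (tr a (ε • ξ)) z := by
  unfold tdist tr
  refine Real.continuous_sqrt.comp (continuous_finset_sum _ fun i _ => ?_)
  refine Continuous.pow (Continuous.dist (continuous_const.add ?_) continuous_const) 2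
  refine Continuous.comp (AddCircle.continuous_mk' (1:ℝ)) ?_
  have hc : Continuous fun ξ : EuclideanSpace ℝ (Fin d) => ξ i := (continuous_apply i).comp (PiLp.continuous_ofLp 2 _)
  simp only [PiLp.smul_apply, smul_eq_mul]
  exact continuous_const.mul hc

lemma iterate_lip {T : Torus d → Torus d} {η : ℝ} (hη : 0 ≤ η)
    (hT : ∀ x y, tdist (T x) (T y) ≤ η * tdist x y) :
    ∀ (j : ℕ) (x y : Torus d), tdist (T^[j] x) (T^[j] y) ≤ η ^ j * tdist x y := by
  intro j
  induction j with
  | zero => simp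
  | succ n ih =>
    intro x y
    rw [Function.iterate_succ_apply', Function.iterate_succ_apply']
    calc tdist (T (T^[n] x)) (T (T^[n] y)) ≤ η * tdist (T^[n] x) (T^[n] y) := hT _ _
      _ ≤ η * (η ^ n * tdist x y) := mul_le_mul_of_nonneg_left (ih x y) hη
      _ = η ^ (n + 1) * tdist x y := by ring

lemma coord_le_norm (ξ : EuclideanSpace ℝ (Fin d)) (i : Fin d) : |ξ i| ≤ ‖ξ‖ := by
  rw [EuclideanSpace.norm_eq, ← Real.sqrt_sq (abs_nonneg (ξ i))]
  refine Real.sqrt_le_sqrt ?_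
  refine Finset.single_le_sum (f := fun j => ‖ξ j‖ ^ 2) (fun j _ => by positivity)
    (Finset.mem_univ i) |>.trans_eq' ?_
  simp [Real.norm_eq_abs]

lemma vol_slice (hd : 1 ≤ d) (w z : Torus d) {ε s : ℝ} (hε0 : 0 < ε) (hε : ε ≤ 1/2)
    (hs : 0 < s) :
    volume ({ξ : EuclideanSpace ℝ (Fin d) | tdist (tr w (ε • ξ)) z < s} ∩
        Metric.closedBall 0 1) ≤
      3 ^ d * ENNReal.ofReal ((s / ε) ^ d) *
        volume (Metric.closedBall (0 : EuclideanSpace ℝ (Fin d)) 1) := by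
  haveI : Nonempty (Fin d) := ⟨⟨0, hd⟩⟩
  haveI : Nontrivial (EuclideanSpace ℝ (Fin d)) := inferInstance
  choose c hc hc2 using fun i => circle_rep (z i - w i)
  set K : Finset (Fin d → ℤ) := Fintype.piFinset fun _ => Finset.Icc (-1) 1 with hK
  set ctr : (Fin d → ℤ) → EuclideanSpace ℝ (Fin d) :=
    fun k => (WithLp.equiv 2 (Fin d → ℝ)).symm fun i => (c i + k i) / ε with hctr
  have hcov : {ξ : EuclideanSpace ℝ (Fin d) | tdist (tr w (ε • ξ)) z < s} ∩
      Metric.closedBall 0 1 ⊆ ⋃ k ∈ K, Metric.ball (ctr k) (s / ε) := by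
    rintro ξ ⟨hξ1, hξ2⟩
    have hnorm : ‖ξ‖ ≤ 1 := mem_closedBall_zero_iff.mp hξ2
    set u : Fin d → ℝ := fun i => ε * ξ i with hu
    set k : Fin d → ℤ := fun i => round (u i - c i) with hk'
    have hDi : ∀ i, dist (tr w (ε • ξ) i) (z i) = |u i - c i - (k i : ℝ)| := by
      intro i
      have e0 : tr w (ε • ξ) i = w i + ((u i : ℝ) : AddCircle (1:ℝ)) := by
        simp [tr, hu, PiLp.smul_apply, smul_eq_mul]
      rw [e0]
      have e1 : dist (w i + ((u i : ℝ) : AddCircle (1:ℝ))) (z i)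
          = dist ((u i : ℝ) : AddCircle (1:ℝ)) (z i - w i) := by
        rw [dist_eq_norm, dist_eq_norm]
        congr 1
        abel
      rw [e1, ← hc i, circle_dist]
    have hkmem : k ∈ K := by
      rw [hK, Fintype.mem_piFinset]
      intro i
      have h1 : |u i| ≤ 1/2 := by
        have h := (coord_le_norm ξ i).trans hnorm
        calc |u i| = ε * |ξ i| := by simp only [hu]; rw [abs_mul, abs_of_pos hε0]
          _ ≤ ε * 1 := mul_le_mul_of_nonneg_left h hε0.le
          _ ≤ 1/2 := by linarith
      have h2 : |u i - c i| ≤ 1 := by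
        calc |u i - c i| ≤ |u i| + |c i| := abs_sub _ _
          _ ≤ 1/2 + 1/2 := add_le_add h1 (hc2 i)
          _ = 1 := by norm_num
      have h3 : |(k i : ℝ)| ≤ 3/2 := by
        have h4 : |(k i : ℝ) - (u i - c i)| ≤ 1/2 := by
          rw [hk', abs_sub_comm]; exact abs_sub_round _
        calc |(k i : ℝ)| ≤ |(k i : ℝ) - (u i - c i)| + |u i - c i| := by
              simpa using abs_add_le ((k i : ℝ) - (u i - c i)) (u i - c i)
          _ ≤ 1/2 + 1 := add_le_add h4 h2
          _ = 3/2 := by norm_num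
      have h5 : |k i| < 2 := by
        exact_mod_cast lt_of_le_of_lt h3 (by norm_num : (3/2:ℝ) < 2)
      have h6 : |k i| ≤ 1 := Int.lt_add_one_iff.mp h5
      rw [Finset.mem_Icc, ← abs_le]
      exact h6
    refine Set.mem_biUnion hkmem ?_
    rw [Metric.mem_ball, EuclideanSpace.dist_eq]
    have hdist_i : ∀ i, dist (ξ i) (ctr k i) = |u i - c i - (k i : ℝ)| / ε := by
      intro i
      have hc' : ctr k i = (c i + k i) / ε := by
        rfl
      rw [hc', Real.dist_eq]
      have e2 : ξ i - (c i + (k i : ℝ)) / ε = (u i - c i - (k i : ℝ)) / ε := by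
        simp only [hu]; field_simp; ring
      rw [e2, abs_div, abs_of_pos hε0]
    have hsum : ∑ i, dist (ξ i) (ctr k i) ^ 2 = (∑ i, |u i - c i - (k i : ℝ)| ^ 2) / ε ^ 2 := by
      rw [Finset.sum_div]
      exact Finset.sum_congr rfl fun i _ => by rw [hdist_i i, div_pow]
    rw [hsum, Real.sqrt_div (by positivity), Real.sqrt_sq hε0.le]
    have hlt : Real.sqrt (∑ i, |u i - c i - (k i : ℝ)| ^ 2) < s := by
      have h := hξ1
      simp only [Set.mem_setOf_eq, tdist] at h
      calc Real.sqrt (∑ i, |u i - c i - (k i : ℝ)| ^ 2)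
          = Real.sqrt (∑ i, dist (tr w (ε • ξ) i) (z i) ^ 2) := by
            congr 1; exact Finset.sum_congr rfl fun i _ => by rw [hDi i]
        _ < s := h
    exact div_lt_div_of_pos_right hlt hε0
  calc volume _ ≤ volume (⋃ k ∈ K, Metric.ball (ctr k) (s / ε)) := measure_mono hcov
    _ ≤ ∑ k ∈ K, volume (Metric.ball (ctr k) (s / ε)) := measure_biUnion_finset_le K _
    _ = ∑ k ∈ K, ENNReal.ofReal ((s / ε) ^ d) *
        volume (Metric.ball (0 : EuclideanSpace ℝ (Fin d)) 1) := by
        refine Finset.sum_congr rfl fun k _ => ?_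
        rw [Measure.addHaar_ball _ _ (div_nonneg hs.le hε0.le), finrank_euclideanSpace_fin]
    _ ≤ 3 ^ d * ENNReal.ofReal ((s / ε) ^ d) *
        volume (Metric.closedBall (0 : EuclideanSpace ℝ (Fin d)) 1) := by
        rw [Finset.sum_const]
        have hcard : K.card = 3 ^ d := by
          rw [hK, Fintype.card_piFinset]
          simp [Int.card_Icc]
        rw [hcard, nsmul_eq_mul, ← mul_assoc]
        push_cast
        gcongr
        exact Metric.ball_subset_closedBall

lemma theta_le (θ : Measure (EuclideanSpace ℝ (Fin d)))
    (ρ : EuclideanSpace ℝ (Fin d) → ℝ)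
    (hθρ : θ = (volume.restrict (Metric.closedBall 0 1)).withDensity
        fun ξ => ENNReal.ofReal (ρ ξ))
    (E : Set (EuclideanSpace ℝ (Fin d))) (hE : MeasurableSet E) :
    θ E ≤ eLpNormEssSup ρ (volume.restrict (Metric.closedBall 0 1)) *
      volume (E ∩ Metric.closedBall 0 1) := by
  rw [hθρ, withDensity_apply _ hE]
  calc ∫⁻ x in E, ENNReal.ofReal (ρ x) ∂(volume.restrict (Metric.closedBall 0 1))
      ≤ ∫⁻ _ in E, eLpNormEssSup ρ (volume.restrict (Metric.closedBall 0 1))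
          ∂(volume.restrict (Metric.closedBall 0 1)) := by
        refine lintegral_mono_ae (ae_restrict_of_ae ?_)
        filter_upwards [ae_le_eLpNormEssSup (f := ρ)
          (μ := volume.restrict (Metric.closedBall 0 1))] with x hx
        exact le_trans (Real.ofReal_le_enorm _) hx
    _ = eLpNormEssSup ρ (volume.restrict (Metric.closedBall 0 1)) *
        volume (E ∩ Metric.closedBall 0 1) := by
        rw [setLIntegral_const, Measure.restrict_apply hE]

end Aux

/-- If `T` is `η`-Lipschitz (`η ≥ 1`), `θ` has density `ρ ∈ L^∞` w.r.t.
Lebesgue measure on the closed unit ball `S`, `ε ∈ (0, 1/2]`, `r > 0`, `α ≥ 1` and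
`2 η^α r ≤ ε`, then the `θ⊗θ`-measure of the pairs `(ξ, ξ')` for which the approximated
first return time of `B(z,r)` is `≤ α` is bounded by
`3^d · K_d · ‖ρ‖_∞ · (2r/ε)^d · Σ_{j=1}^{α} η^{jd}`. -/
theorem statement_3 {d : ℕ} (hd : 1 ≤ d)
    (T : Torus d → Torus d) (η : ℝ) (hη : 1 ≤ η)
    (hT : ∀ x y, tdist (T x) (T y) ≤ η * tdist x y)
    (θ : Measure (EuclideanSpace ℝ (Fin d))) [IsProbabilityMeasure θ]
    (ρ : EuclideanSpace ℝ (Fin d) → ℝ)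
    (hθρ : θ = (volume.restrict (Metric.closedBall 0 1)).withDensity
        fun ξ => ENNReal.ofReal (ρ ξ))
    (hρ : MemLp ρ ⊤ (volume.restrict (Metric.closedBall 0 1)))
    (z : Torus d) (ε : ℝ) (hε0 : 0 < ε) (hε : ε ≤ 1 / 2)
    (r : ℝ) (hr : 0 < r) (α : ℕ) (hα : 1 ≤ α) (hαr : 2 * η ^ α * r ≤ ε) :
    (θ.prod θ) {q : EuclideanSpace ℝ (Fin d) × EuclideanSpace ℝ (Fin d) |
        q.1 ∈ Metric.closedBall 0 1 ∧ q.2 ∈ Metric.closedBall 0 1 ∧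
        ∃ j : ℕ, 1 ≤ j ∧ j ≤ α ∧ ∃ x : Torus d,
          tdist (tr x (ε • q.1)) z < r ∧ tdist (tr (T^[j] x) (ε • q.2)) z < r} ≤
      ENNReal.ofReal ((3 : ℝ) ^ d *
        (volume (Metric.closedBall (0 : EuclideanSpace ℝ (Fin d)) 1)).toReal *
        (eLpNorm ρ ⊤ (volume.restrict (Metric.closedBall 0 1))).toReal *
        (2 * r / ε) ^ d * ∑ j ∈ Finset.Icc 1 α, η ^ (j * d)) := by
  have hη0 : (0:ℝ) < η := lt_of_lt_of_le one_pos hη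
  set N := eLpNormEssSup ρ (volume.restrict
    (Metric.closedBall (0 : EuclideanSpace ℝ (Fin d)) 1)) with hN
  set Kd := volume (Metric.closedBall (0 : EuclideanSpace ℝ (Fin d)) 1) with hKd
  have hNKd : eLpNorm ρ ⊤ (volume.restrict
      (Metric.closedBall (0 : EuclideanSpace ℝ (Fin d)) 1)) = N := eLpNorm_exponent_top
  have hKdfin : Kd ≠ ⊤ := measure_closedBall_lt_top.ne
  have hNfin : N ≠ ⊤ := by
    have h := hρ.2
    rw [eLpNorm_exponent_top] at h
    exact h.ne
  set s : ℕ → ℝ := fun j => 2 * η ^ j * r with hsdef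
  have hspos : ∀ j, 0 < s j := fun j =>
    mul_pos (mul_pos two_pos (pow_pos hη0 j)) hr
  set D : ℕ → Set (EuclideanSpace ℝ (Fin d) × EuclideanSpace ℝ (Fin d)) :=
    fun j => ⋃ x : Torus d, {ξ : EuclideanSpace ℝ (Fin d) | tdist (tr x (ε • ξ)) z < r} ×ˢ
      {ξ' : EuclideanSpace ℝ (Fin d) | tdist (tr (T^[j] x) (ε • ξ')) z < r} with hD
  have hDopen : ∀ j, IsOpen (D j) := by
    intro j
    refine isOpen_iUnion fun x => IsOpen.prod ?_ ?_
    · exact isOpen_lt (cont_tdist x z ε) continuous_const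
    · exact isOpen_lt (cont_tdist (T^[j] x) z ε) continuous_const
  have hsub : {q : EuclideanSpace ℝ (Fin d) × EuclideanSpace ℝ (Fin d) |
        q.1 ∈ Metric.closedBall 0 1 ∧ q.2 ∈ Metric.closedBall 0 1 ∧
        ∃ j : ℕ, 1 ≤ j ∧ j ≤ α ∧ ∃ x : Torus d,
          tdist (tr x (ε • q.1)) z < r ∧ tdist (tr (T^[j] x) (ε • q.2)) z < r} ⊆
      ⋃ j ∈ Finset.Icc 1 α, D j := by
    rintro ⟨ξ, ξ'⟩ ⟨-, -, j, hj1, hj2, x, hx1, hx2⟩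
    refine Set.mem_biUnion (Finset.mem_Icc.mpr ⟨hj1, hj2⟩) ?_
    simp only [hD, Set.mem_iUnion, Set.mem_prod, Set.mem_setOf_eq]
    exact ⟨x, hx1, hx2⟩
  have hper : ∀ j ∈ Finset.Icc 1 α,
      (θ.prod θ) (D j) ≤ N * (3 ^ d * ENNReal.ofReal ((s j / ε) ^ d) * Kd) := by
    intro j _
    rw [Measure.prod_apply (hDopen j).measurableSet]
    have hpt : ∀ ξ : EuclideanSpace ℝ (Fin d),
        θ (Prod.mk ξ ⁻¹' D j) ≤ N * (3 ^ d * ENNReal.ofReal ((s j / ε) ^ d) * Kd) := by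
      intro ξ
      have hEopen : IsOpen {ξ' : EuclideanSpace ℝ (Fin d) |
          tdist (tr (T^[j] (tr z (-(ε • ξ)))) (ε • ξ')) z < s j} :=
        isOpen_lt (cont_tdist _ z ε) continuous_const
      have hslice : Prod.mk ξ ⁻¹' D j ⊆ {ξ' : EuclideanSpace ℝ (Fin d) |
          tdist (tr (T^[j] (tr z (-(ε • ξ)))) (ε • ξ')) z < s j} := by
        intro ξ' hξ'
        simp only [hD, Set.mem_preimage, Set.mem_iUnion, Set.mem_prod,
          Set.mem_setOf_eq] at hξ'
        obtain ⟨x, hx1, hx2⟩ := hξ'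
        have h0 : tdist x (tr z (-(ε • ξ))) < r := by
          have e := tdist_tr x (tr z (-(ε • ξ))) (ε • ξ)
          rw [tr_tr_neg z (ε • ξ)] at e
          rw [e] at hx1
          exact hx1
        have h1 : tdist (T^[j] x) (T^[j] (tr z (-(ε • ξ)))) ≤
            η ^ j * tdist x (tr z (-(ε • ξ))) :=
          iterate_lip (le_trans zero_le_one hη) hT j _ _
        have hηj : (1:ℝ) ≤ η ^ j := one_le_pow₀ hη
        have h2 : tdist (tr (T^[j] (tr z (-(ε • ξ)))) (ε • ξ'))
            (tr (T^[j] x) (ε • ξ')) = tdist (T^[j] x) (T^[j] (tr z (-(ε • ξ)))) := by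
          rw [tdist_tr, tdist_comm']
        show tdist (tr (T^[j] (tr z (-(ε • ξ)))) (ε • ξ')) z < s j
        calc tdist (tr (T^[j] (tr z (-(ε • ξ)))) (ε • ξ')) z
            ≤ tdist (tr (T^[j] (tr z (-(ε • ξ)))) (ε • ξ')) (tr (T^[j] x) (ε • ξ')) +
              tdist (tr (T^[j] x) (ε • ξ')) z := tdist_triangle' _ _ _
          _ = tdist (T^[j] x) (T^[j] (tr z (-(ε • ξ)))) +
              tdist (tr (T^[j] x) (ε • ξ')) z := by rw [h2]
          _ < η ^ j * r + r := by
              refine add_lt_add_of_le_of_lt (h1.trans ?_) hx2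
              exact mul_le_mul_of_nonneg_left h0.le (by positivity)
          _ ≤ s j := by
              simp only [hsdef]
              nlinarith [hηj, hr]
      calc θ (Prod.mk ξ ⁻¹' D j)
          ≤ θ {ξ' : EuclideanSpace ℝ (Fin d) |
              tdist (tr (T^[j] (tr z (-(ε • ξ)))) (ε • ξ')) z < s j} :=
            measure_mono hslice
        _ ≤ N * volume ({ξ' : EuclideanSpace ℝ (Fin d) |
              tdist (tr (T^[j] (tr z (-(ε • ξ)))) (ε • ξ')) z < s j} ∩
              Metric.closedBall 0 1) :=
            theta_le θ ρ hθρ _ hEopen.measurableSet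
        _ ≤ N * (3 ^ d * ENNReal.ofReal ((s j / ε) ^ d) * Kd) := by
            refine mul_le_mul_right ?_ N
            exact vol_slice hd _ z hε0 hε (hspos j)
    calc ∫⁻ ξ, θ (Prod.mk ξ ⁻¹' D j) ∂θ
        ≤ ∫⁻ _, N * (3 ^ d * ENNReal.ofReal ((s j / ε) ^ d) * Kd) ∂θ := lintegral_mono hpt
      _ = N * (3 ^ d * ENNReal.ofReal ((s j / ε) ^ d) * Kd) := by
          rw [lintegral_const, measure_univ, mul_one]
  refine le_trans (measure_mono hsub) ?_
  refine le_trans (measure_biUnion_finset_le _ _) ?_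
  refine le_trans (Finset.sum_le_sum hper) ?_
  have h3d : (3 : ENNReal) ^ d = ENNReal.ofReal ((3:ℝ) ^ d) := by
    rw [ENNReal.ofReal_pow (by norm_num : (0:ℝ) ≤ 3), ENNReal.ofReal_ofNat]
  have hterm : ∀ j, N * (3 ^ d * ENNReal.ofReal ((s j / ε) ^ d) * Kd)
      = ENNReal.ofReal (N.toReal * ((3:ℝ) ^ d * (s j / ε) ^ d * Kd.toReal)) := by
    intro j
    conv_lhs => rw [← ENNReal.ofReal_toReal hNfin, ← ENNReal.ofReal_toReal hKdfin, h3d]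
    rw [← ENNReal.ofReal_mul (by positivity : (0:ℝ) ≤ (3:ℝ) ^ d),
      ← ENNReal.ofReal_mul (by positivity : (0:ℝ) ≤ (3:ℝ) ^ d * (s j / ε) ^ d),
      ← ENNReal.ofReal_mul ENNReal.toReal_nonneg]
  have hreal : ∑ j ∈ Finset.Icc 1 α, N.toReal * ((3:ℝ) ^ d * (s j / ε) ^ d * Kd.toReal)
      = (3:ℝ) ^ d * Kd.toReal * N.toReal * (2 * r / ε) ^ d *
        ∑ j ∈ Finset.Icc 1 α, η ^ (j * d) := by
    rw [Finset.mul_sum]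
    refine Finset.sum_congr rfl fun j _ => ?_
    have e : s j / ε = 2 * r / ε * η ^ j := by simp only [hsdef]; ring
    rw [e, mul_pow, ← pow_mul]
    ring
  calc ∑ j ∈ Finset.Icc 1 α, N * (3 ^ d * ENNReal.ofReal ((s j / ε) ^ d) * Kd)
      = ∑ j ∈ Finset.Icc 1 α,
          ENNReal.ofReal (N.toReal * ((3:ℝ) ^ d * (s j / ε) ^ d * Kd.toReal)) :=
        Finset.sum_congr rfl fun j _ => hterm j
    _ = ENNReal.ofReal (∑ j ∈ Finset.Icc 1 α,
          N.toReal * ((3:ℝ) ^ d * (s j / ε) ^ d * Kd.toReal)) :=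
        (ENNReal.ofReal_sum_of_nonneg fun j _ => by positivity).symm
    _ ≤ _ := by
        rw [hreal, hNKd]
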